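/- Let 1 ≤ p < ∞, let X₁, …, Xₙ, Y be real Banach spaces, and let T : X₁ × ⋯ × Xₙ → Y be a continuous n-linear operator which is Lipschitz p-summing with constant c. Then there exist a Borel probability measure μ on the closed unit ball B of continuous n-linear forms on X₁ × ⋯ × Xₙ (with the topology of pointwise convergence) and a map h̃ : L_p(μ) → ℓ∞(B_{Y*}) (the space of bounded real-valued functions on the closed unit ball of the dual Y*, with the supremum norm) that is Lipschitz with constant c, such that for every u = (x₁, …, xₙ) ∈ X₁ × ⋯ × Xₙ, h̃(g(u)) is the function y* ↦ y*(T(u)), where g(u) ∈ L_p(μ) denotes the equivalence class of the continuous function φ ↦ φ(u) on B. -/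

import Mathlib

open scoped BigOperators ENNReal
open MeasureTheory

/-- `T` is Lipschitz `p`-summing with constant `c`. -/
def LipschitzPSumming {n : ℕ} {X : Fin n → Type*} [∀ i, NormedAddCommGroup (X i)]
    [∀ i, NormedSpace ℝ (X i)] {Y : Type*} [NormedAddCommGroup Y] [NormedSpace ℝ Y]
    (p c : ℝ) (T : ContinuousMultilinearMap ℝ X Y) : Prop :=
  ∀ (k : ℕ) (u v : Fin k → ((i : Fin n) → X i)),
    (∑ i, ‖T (u i) - T (v i)‖ ^ p) ^ (1 / p) ≤
      c * ⨆ φ : {φ : ContinuousMultilinearMap ℝ X ℝ // ‖φ‖ ≤ 1},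
        (∑ i, |φ.1 (u i) - φ.1 (v i)| ^ p) ^ (1 / p)

/-- The closed unit ball of continuous `n`-linear forms on `X₁ × ⋯ × Xₙ`. -/
def FormBall {n : ℕ} (X : Fin n → Type*) [∀ i, NormedAddCommGroup (X i)]
    [∀ i, NormedSpace ℝ (X i)] : Type _ :=
  {φ : ContinuousMultilinearMap ℝ X ℝ // ‖φ‖ ≤ 1}

/-- The topology of pointwise convergence (weak-* topology) on the unit ball of
continuous `n`-linear forms. -/
instance FormBall.topologicalSpace {n : ℕ} (X : Fin n → Type*)
    [∀ i, NormedAddCommGroup (X i)] [∀ i, NormedSpace ℝ (X i)] :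
    TopologicalSpace (FormBall X) :=
  TopologicalSpace.induced
    (fun (φ : FormBall X) (x : (i : Fin n) → X i) => φ.1 x) Pi.topologicalSpace

/-- The Borel σ-algebra of the topology of pointwise convergence. -/
instance FormBall.measurableSpace {n : ℕ} (X : Fin n → Type*)
    [∀ i, NormedAddCommGroup (X i)] [∀ i, NormedSpace ℝ (X i)] :
    MeasurableSpace (FormBall X) :=
  borel (FormBall X)

/-- The closed unit ball of the dual of `Y`. -/
def DualBall (Y : Type*) [NormedAddCommGroup Y] [NormedSpace ℝ Y] : Type _ :=
  {f : Y →L[ℝ] ℝ // ‖f‖ ≤ 1}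


open scoped BigOperators ENNReal
open MeasureTheory Topology

noncomputable section
namespace Pietsch

variable {n : ℕ} {X : Fin n → Type*} [∀ i, NormedAddCommGroup (X i)] [∀ i, NormedSpace ℝ (X i)]

/-- evaluation map -/
def ev : FormBall X → ((i : Fin n) → X i) → ℝ := fun φ u => φ.1 u

lemma isInducing_ev : IsInducing (ev (X := X)) := ⟨rfl⟩

lemma injective_ev : Function.Injective (ev (X := X)) := by
  intro φ ψ h
  exact Subtype.ext (ContinuousMultilinearMap.ext fun u => congrFun h u)

lemma continuous_eval (u : (i : Fin n) → X i) :
    Continuous fun φ : FormBall X => φ.1 u :=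
  (continuous_apply u).comp isInducing_ev.continuous

instance : T2Space (FormBall X) :=
  IsEmbedding.t2Space ⟨isInducing_ev, injective_ev⟩

instance : Nonempty (FormBall X) := ⟨⟨0, by simp⟩⟩

instance : BorelSpace (FormBall X) := ⟨rfl⟩

/-- the range of `ev` -/
def evSet : Set (((i : Fin n) → X i) → ℝ) :=
  (Set.univ.pi fun u => Set.Icc (-∏ i, ‖u i‖) (∏ i, ‖u i‖)) ∩
    ({F | ∀ (u : (i : Fin n) → X i) (i : Fin n) (x y : X i),
        F (Function.update u i (x + y)) = F (Function.update u i x) + F (Function.update u i y)} ∩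
     {F | ∀ (u : (i : Fin n) → X i) (i : Fin n) (r : ℝ) (x : X i),
        F (Function.update u i (r • x)) = r * F (Function.update u i x)})

lemma range_ev : Set.range (ev (X := X)) = evSet := by
  apply Set.Subset.antisymm
  · rintro _ ⟨φ, rfl⟩
    refine ⟨fun u _ => ?_, fun u i x y => ?_, fun u i r x => ?_⟩
    · rw [Set.mem_Icc, ← abs_le, ← Real.norm_eq_abs]
      calc ‖φ.1 u‖ ≤ ‖φ.1‖ * ∏ i, ‖u i‖ := φ.1.le_opNorm u
        _ ≤ 1 * ∏ i, ‖u i‖ := by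
            exact mul_le_mul_of_nonneg_right φ.2 (Finset.prod_nonneg fun i _ => norm_nonneg _)
        _ = ∏ i, ‖u i‖ := one_mul _
    · exact φ.1.map_update_add u i x y
    · exact φ.1.map_update_smul u i r x
  · rintro F ⟨hb, ha, hs⟩
    set f : MultilinearMap ℝ X ℝ :=
      { toFun := F
        map_update_add' := fun u i x y => by convert ha u i x y using 2 <;> congr!
        map_update_smul' := fun u i r x => by
          rw [smul_eq_mul]; convert hs u i r x using 2 <;> congr! }
    have hbound : ∀ u, ‖f u‖ ≤ 1 * ∏ i, ‖u i‖ := by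
      intro u
      rw [one_mul, Real.norm_eq_abs, abs_le]
      have := hb u (Set.mem_univ u)
      exact ⟨this.1, this.2⟩
    refine ⟨⟨f.mkContinuous 1 hbound, f.mkContinuous_norm_le zero_le_one hbound⟩, rfl⟩

instance : CompactSpace (FormBall X) := by
  rw [← isCompact_univ_iff, isInducing_ev.isCompact_iff, Set.image_univ, range_ev]
  refine ((isCompact_univ_pi fun u => isCompact_Icc).inter_right ?_)
  apply IsClosed.inter
  · have : {F : ((i : Fin n) → X i) → ℝ | ∀ (u : (i : Fin n) → X i) (i : Fin n) (x y : X i),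
        F (Function.update u i (x + y)) = F (Function.update u i x) + F (Function.update u i y)} =
        ⋂ (u : (i : Fin n) → X i) (i : Fin n) (x : X i) (y : X i),
          {F | F (Function.update u i (x + y)) =
            F (Function.update u i x) + F (Function.update u i y)} := by
      ext F; simp [Set.mem_iInter]
    rw [this]
    refine isClosed_iInter fun u => isClosed_iInter fun i => isClosed_iInter fun x =>
      isClosed_iInter fun y => isClosed_eq (continuous_apply _)
        (Continuous.add (continuous_apply (Function.update u i x))
          (continuous_apply (Function.update u i y)))
  · have : {F : ((i : Fin n) → X i) → ℝ | ∀ (u : (i : Fin n) → X i) (i : Fin n) (r : ℝ) (x : X i),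
        F (Function.update u i (r • x)) = r * F (Function.update u i x)} =
        ⋂ (u : (i : Fin n) → X i) (i : Fin n) (r : ℝ) (x : X i),
          {F | F (Function.update u i (r • x)) = r * F (Function.update u i x)} := by
      ext F; simp [Set.mem_iInter]
    rw [this]
    refine isClosed_iInter fun u => isClosed_iInter fun i => isClosed_iInter fun r =>
      isClosed_iInter fun x => isClosed_eq (continuous_apply _)
        (Continuous.mul continuous_const (continuous_apply (Function.update u i x)))

end Pietsch

namespace Pietsch
variable {n : ℕ} {X : Fin n → Type*} [∀ i, NormedAddCommGroup (X i)] [∀ i, NormedSpace ℝ (X i)]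
variable {Y : Type*} [NormedAddCommGroup Y] [NormedSpace ℝ Y]

lemma abs_apply_le (φ : FormBall X) (m : (i : Fin n) → X i) : |φ.1 m| ≤ ∏ j, ‖m j‖ := by
  rw [← Real.norm_eq_abs]
  calc ‖φ.1 m‖ ≤ ‖φ.1‖ * ∏ j, ‖m j‖ := φ.1.le_opNorm m
    _ ≤ 1 * ∏ j, ‖m j‖ :=
        mul_le_mul_of_nonneg_right φ.2 (Finset.prod_nonneg fun j _ => norm_nonneg _)
    _ = _ := one_mul _

lemma weighted_ineq {p c : ℝ} (hp : 1 ≤ p) (hc : 0 ≤ c)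
    {T : ContinuousMultilinearMap ℝ X Y} (hT : LipschitzPSumming p c T)
    {ι : Type*} [Fintype ι] (u v : ι → ((i : Fin n) → X i)) (w : ι → ℝ) (hw : ∀ i, 0 ≤ w i) :
    ∑ i, w i * ‖T (u i) - T (v i)‖ ^ p ≤
      ⨆ φ : FormBall X, ∑ i, w i * (c ^ p * |φ.1 (u i) - φ.1 (v i)| ^ p) := by
  have hp0 : (0:ℝ) < p := lt_of_lt_of_le one_pos hp
  rcases Nat.eq_zero_or_pos n with hn | hn
  · subst hn
    have huv : ∀ i, u i = v i := fun i => funext fun j => j.elim0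
    have h0 : ∀ φ : FormBall X, ∑ i, w i * (c ^ p * |φ.1 (u i) - φ.1 (v i)| ^ p) = 0 := by
      intro φ
      refine Finset.sum_eq_zero fun i _ => ?_
      rw [huv i]
      simp [Real.zero_rpow hp0.ne']
    have hA : ∑ i, w i * ‖T (u i) - T (v i)‖ ^ p = 0 := by
      refine Finset.sum_eq_zero fun i _ => ?_
      rw [huv i]
      simp [Real.zero_rpow hp0.ne']
    rw [hA]
    simp only [h0, ciSup_const, le_refl]
  · -- main case : n > 0
    set i₀ : Fin n := ⟨0, hn⟩
    set u' : ι → ((i : Fin n) → X i) := fun i =>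
      Function.update (u i) i₀ ((w i ^ (1/p)) • (u i i₀)) with hu'
    set v' : ι → ((i : Fin n) → X i) := fun i =>
      Function.update (v i) i₀ ((w i ^ (1/p)) • (v i i₀)) with hv'
    have hwp : ∀ i, ((w i ^ (1/p)) : ℝ) ^ p = w i := by
      intro i
      rw [← Real.rpow_mul (hw i), one_div_mul_cancel hp0.ne', Real.rpow_one]
    have hwnn : ∀ i, (0:ℝ) ≤ w i ^ (1/p) := fun i => Real.rpow_nonneg (hw i) _
    have key1 : ∀ i, ‖T (u' i) - T (v' i)‖ ^ p = w i * ‖T (u i) - T (v i)‖ ^ p := by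
      intro i
      have h1 : T (u' i) = (w i ^ (1/p)) • T (u i) := by
        rw [hu']; dsimp only
        rw [T.map_update_smul, Function.update_eq_self]
      have h2 : T (v' i) = (w i ^ (1/p)) • T (v i) := by
        rw [hv']; dsimp only
        rw [T.map_update_smul, Function.update_eq_self]
      rw [h1, h2, ← smul_sub, norm_smul, Real.norm_eq_abs, abs_of_nonneg (hwnn i),
        Real.mul_rpow (hwnn i) (norm_nonneg _), hwp i]
    have key2 : ∀ (φ : FormBall X) (i),
        |φ.1 (u' i) - φ.1 (v' i)| ^ p = w i * |φ.1 (u i) - φ.1 (v i)| ^ p := by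
      intro φ i
      have h1 : φ.1 (u' i) = (w i ^ (1/p)) * φ.1 (u i) := by
        rw [hu']; dsimp only
        rw [φ.1.map_update_smul, Function.update_eq_self, smul_eq_mul]
      have h2 : φ.1 (v' i) = (w i ^ (1/p)) * φ.1 (v i) := by
        rw [hv']; dsimp only
        rw [φ.1.map_update_smul, Function.update_eq_self, smul_eq_mul]
      rw [h1, h2, ← mul_sub, abs_mul, abs_of_nonneg (hwnn i),
        Real.mul_rpow (hwnn i) (abs_nonneg _), hwp i]
    set S : FormBall X → ℝ := fun φ => ∑ i, w i * |φ.1 (u i) - φ.1 (v i)| ^ p with hSdef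
    have hS0 : ∀ φ, 0 ≤ S φ := fun φ => Finset.sum_nonneg fun i _ =>
      mul_nonneg (hw i) (Real.rpow_nonneg (abs_nonneg _) _)
    set M : ℝ := ⨆ φ : FormBall X, ∑ i, w i * (c ^ p * |φ.1 (u i) - φ.1 (v i)| ^ p) with hM
    have hMS : ∀ φ : FormBall X,
        ∑ i, w i * (c ^ p * |φ.1 (u i) - φ.1 (v i)| ^ p) = c ^ p * S φ := by
      intro φ
      rw [hSdef]; dsimp only
      rw [Finset.mul_sum]
      exact Finset.sum_congr rfl fun i _ => by ring
    have hbdd : BddAbove (Set.range fun φ : FormBall X =>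
        ∑ i, w i * (c ^ p * |φ.1 (u i) - φ.1 (v i)| ^ p)) := by
      refine ⟨∑ i, w i * (c ^ p * ((∏ j, ‖u i j‖) + ∏ j, ‖v i j‖) ^ p), ?_⟩
      rintro _ ⟨φ, rfl⟩
      refine Finset.sum_le_sum fun i _ => ?_
      refine mul_le_mul_of_nonneg_left (mul_le_mul_of_nonneg_left ?_
        (Real.rpow_nonneg hc _)) (hw i)
      refine Real.rpow_le_rpow (abs_nonneg _) ?_ hp0.le
      calc |φ.1 (u i) - φ.1 (v i)| ≤ |φ.1 (u i)| + |φ.1 (v i)| := abs_sub _ _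
        _ ≤ (∏ j, ‖u i j‖) + ∏ j, ‖v i j‖ :=
            add_le_add (abs_apply_le φ _) (abs_apply_le φ _)
    have hM0 : 0 ≤ M := by
      refine le_trans ?_ (le_ciSup hbdd ⟨0, by simp⟩)
      exact Finset.sum_nonneg fun i _ => mul_nonneg (hw i)
        (mul_nonneg (Real.rpow_nonneg hc _) (Real.rpow_nonneg (abs_nonneg _) _))
    -- apply hT
    set k := Fintype.card ι
    set e : Fin k ≃ ι := (Fintype.equivFin ι).symm with he
    have hT' : (∑ j, ‖T ((u' ∘ e) j) - T ((v' ∘ e) j)‖ ^ p) ^ (1/p) ≤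
        c * ⨆ φ : FormBall X, (∑ j, |φ.1 ((u' ∘ e) j) - φ.1 ((v' ∘ e) j)| ^ p) ^ (1/p) :=
      hT k (u' ∘ e) (v' ∘ e)
    have hsum1 : ∑ j, ‖T ((u' ∘ e) j) - T ((v' ∘ e) j)‖ ^ p =
        ∑ i, w i * ‖T (u i) - T (v i)‖ ^ p :=
      Fintype.sum_equiv e _ _ fun j => key1 (e j)
    have hsum2 : ∀ φ : FormBall X, ∑ j, |φ.1 ((u' ∘ e) j) - φ.1 ((v' ∘ e) j)| ^ p = S φ :=
      fun φ => Fintype.sum_equiv e _ _ fun j => key2 φ (e j)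
    rw [hsum1] at hT'
    simp only [hsum2] at hT'
    -- bound the RHS of hT'
    have hco : c * (⨆ φ : FormBall X, (S φ) ^ (1/p)) ≤ M ^ (1/p) := by
      rw [Real.mul_iSup_of_nonneg hc]
      refine ciSup_le fun φ => ?_
      have h1 : c * S φ ^ (1/p) = (c ^ p * S φ) ^ (1/p) := by
        rw [Real.mul_rpow (Real.rpow_nonneg hc _) (hS0 φ), one_div,
          Real.rpow_rpow_inv hc hp0.ne']
      rw [h1]
      refine Real.rpow_le_rpow (mul_nonneg (Real.rpow_nonneg hc _) (hS0 φ)) ?_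
        (by positivity)
      rw [← hMS φ]
      exact le_ciSup hbdd φ
    have hfin : (∑ i, w i * ‖T (u i) - T (v i)‖ ^ p) ^ (1/p) ≤ M ^ (1/p) :=
      le_trans hT' hco
    have hA0 : 0 ≤ ∑ i, w i * ‖T (u i) - T (v i)‖ ^ p :=
      Finset.sum_nonneg fun i _ => mul_nonneg (hw i) (Real.rpow_nonneg (norm_nonneg _) _)
    have := Real.rpow_le_rpow (Real.rpow_nonneg hA0 _) hfin hp0.le
    rwa [one_div, Real.rpow_inv_rpow hA0 hp0.ne', Real.rpow_inv_rpow hM0 hp0.ne'] at this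

end Pietsch

namespace Pietsch
variable {n : ℕ} {X : Fin n → Type*} [∀ i, NormedAddCommGroup (X i)] [∀ i, NormedSpace ℝ (X i)]
variable {Y : Type*} [NormedAddCommGroup Y] [NormedSpace ℝ Y]

/-- The basic continuous function `φ ↦ c^p * |φ(u) - φ(v)|^p` on the form ball. -/
def Gmap (p c : ℝ) (hp : 1 ≤ p)
    (q : (((i : Fin n) → X i)) × (((i : Fin n) → X i))) : C(FormBall X, ℝ) :=
  ⟨fun φ => c ^ p * |φ.1 q.1 - φ.1 q.2| ^ p,
    continuous_const.mul (Continuous.rpow_const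
      (((continuous_eval q.1).sub (continuous_eval q.2)).abs)
      (fun _ => Or.inr (le_trans zero_le_one hp)))⟩

lemma Gmap_apply (p c : ℝ) (hp : 1 ≤ p) (q) (φ : FormBall X) :
    Gmap p c hp q φ = c ^ p * |φ.1 q.1 - φ.1 q.2| ^ p := rfl

lemma Gmap_nonneg (p c : ℝ) (hp : 1 ≤ p) (hc : 0 ≤ c) (q) (φ : FormBall X) :
    0 ≤ Gmap p c hp q φ :=
  mul_nonneg (Real.rpow_nonneg hc _) (Real.rpow_nonneg (abs_nonneg _) _)

lemma finite_functional {p c : ℝ} (hp : 1 ≤ p) (hc : 0 ≤ c)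
    {T : ContinuousMultilinearMap ℝ X Y} (hT : LipschitzPSumming p c T)
    (F : Finset ((((i : Fin n) → X i)) × (((i : Fin n) → X i)))) {ε : ℝ} (hε : 0 < ε) :
    ∃ Λ : C(FormBall X, ℝ) → ℝ,
      (∀ f g, Λ (f + g) = Λ f + Λ g) ∧
      (∀ (r : ℝ) (f), Λ (r • f) = r * Λ f) ∧
      (∀ f, (∀ x, 0 ≤ f x) → 0 ≤ Λ f) ∧
      (Λ 1 = 1) ∧
      (∀ q ∈ F, ‖T q.1 - T q.2‖ ^ p ≤ Λ (Gmap p c hp q) + ε) := by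
  classical
  set V := (↥F) → ℝ with hV
  set a : V := fun q => ‖T q.1.1 - T q.1.2‖ ^ p with ha
  set Φ : FormBall X → V := fun φ q => c ^ p * |φ.1 q.1.1 - φ.1 q.1.2| ^ p with hΦ
  set Sset : Set V := {x | ∃ s ∈ convexHull ℝ (Set.range Φ), x ≤ s} with hSset
  have hconv : Convex ℝ Sset := by
    rintro x ⟨sx, hsx, hxle⟩ y ⟨sy, hsy, hyle⟩ α β hα hβ hαβ
    exact ⟨α • sx + β • sy, (convex_convexHull ℝ _) hsx hsy hα hβ hαβ,
      add_le_add (smul_le_smul_of_nonneg_left hxle hα) (smul_le_smul_of_nonneg_left hyle hβ)⟩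
  have key : a ∈ closure Sset := by
    by_contra h
    obtain ⟨ℓ, s₀u, hlt, hgt⟩ :=
      geometric_hahn_banach_closed_point hconv.closure isClosed_closure h
    set lam : ↥F → ℝ := fun q => ℓ (Pi.single q 1) with hlam
    have hsingle_nonneg : ∀ q : ↥F, (0 : V) ≤ Pi.single q (1:ℝ) := by
      intro q
      rw [Pi.le_def]
      intro j
      rw [Pi.single_apply, Pi.zero_apply]
      split <;> norm_num
    have hlam_nonneg : ∀ q, 0 ≤ lam q := by
      intro q
      by_contra hneg
      push_neg at hneg
      set t : ℝ := max 0 ((s₀u + 1 - ℓ (Φ ⟨0, by simp⟩)) / (-lam q)) with ht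
      have ht0 : 0 ≤ t := le_max_left _ _
      have hmem : Φ ⟨0, by simp⟩ - t • (Pi.single q (1:ℝ) : V) ∈ Sset :=
        ⟨Φ ⟨0, by simp⟩, subset_convexHull ℝ _ ⟨_, rfl⟩,
          sub_le_self _ (smul_nonneg ht0 (hsingle_nonneg q))⟩
      have hval : ℓ (Φ ⟨0, by simp⟩ - t • (Pi.single q (1:ℝ) : V)) < s₀u :=
        hlt _ (subset_closure hmem)
      rw [map_sub, ℓ.map_smul, smul_eq_mul] at hval
      have htle : (s₀u + 1 - ℓ (Φ ⟨0, by simp⟩)) / (-lam q) ≤ t := le_max_right _ _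
      rw [div_le_iff₀ (by linarith)] at htle
      nlinarith
    have hrepr : ∀ y : V, ℓ y = ∑ q, y q * lam q := by
      intro y
      have hy : ℓ y = ℓ (∑ q, Pi.single q (y q)) := by rw [Finset.univ_sum_single y]
      rw [hy, map_sum]
      refine Finset.sum_congr rfl fun q _ => ?_
      have hsing : Pi.single q (y q) = (y q) • (Pi.single q (1:ℝ) : V) := by
        funext j
        rw [Pi.smul_apply, Pi.single_apply, Pi.single_apply]
        split <;> simp
      rw [hsing, ℓ.map_smul, smul_eq_mul, hlam]
    have hW := weighted_ineq hp hc hT (fun q : ↥F => q.1.1) (fun q : ↥F => q.1.2)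
      lam hlam_nonneg
    have hsup : (⨆ φ : FormBall X,
        ∑ q : ↥F, lam q * (c ^ p * |φ.1 q.1.1 - φ.1 q.1.2| ^ p)) ≤ s₀u := by
      refine ciSup_le fun φ => ?_
      have hmem : Φ φ ∈ closure Sset :=
        subset_closure ⟨Φ φ, subset_convexHull ℝ _ ⟨φ, rfl⟩, le_refl _⟩
      have h2 := (hlt _ hmem).le
      rw [hrepr (Φ φ)] at h2
      refine le_trans (le_of_eq ?_) h2
      exact Finset.sum_congr rfl fun q _ => by rw [hΦ]; ring
    have hla : ℓ a = ∑ q : ↥F, lam q * ‖T q.1.1 - T q.1.2‖ ^ p := by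
      rw [hrepr a]
      exact Finset.sum_congr rfl fun q _ => by rw [ha]; ring
    have : ℓ a ≤ s₀u := by rw [hla]; exact le_trans hW hsup
    linarith
  obtain ⟨x, hxS, hdist⟩ := Metric.mem_closure_iff.1 key ε hε
  obtain ⟨s, hshull, hxs⟩ := hxS
  have haq : ∀ q : ↥F, a q ≤ s q + ε := by
    intro q
    have h1 : a q - x q ≤ |a q - x q| := le_abs_self _
    have h2 : |a q - x q| ≤ dist a x := by rw [← Real.dist_eq]; exact dist_le_pi_dist a x q
    have h3 := hxs q
    linarith
  rw [convexHull_eq] at hshull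
  obtain ⟨ι', t, w', z, hw0, hw1, hz, hcm⟩ := hshull
  have hsum : s = ∑ i ∈ t, w' i • z i := by
    rw [← hcm, Finset.centerMass_eq_of_sum_1 _ _ hw1]
  choose φs hφs using hz
  refine ⟨fun f => ∑ i ∈ t.attach, w' i.1 * f (φs i.1 i.2), ?_, ?_, ?_, ?_, ?_⟩
  · intro f g
    rw [← Finset.sum_add_distrib]
    exact Finset.sum_congr rfl fun i _ => by rw [ContinuousMap.add_apply]; ring
  · intro r f
    rw [Finset.mul_sum]
    exact Finset.sum_congr rfl fun i _ => by rw [ContinuousMap.smul_apply, smul_eq_mul]; ring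
  · intro f hf
    exact Finset.sum_nonneg fun i _ => mul_nonneg (hw0 _ i.2) (hf _)
  · simp only [ContinuousMap.one_apply, mul_one]
    rw [Finset.sum_attach t w']
    exact hw1
  · intro q hq
    have h := haq ⟨q, hq⟩
    have hsq : s ⟨q, hq⟩ = ∑ i ∈ t.attach, w' i.1 * (Gmap p c hp q) (φs i.1 i.2) := by
      rw [hsum, ← Finset.sum_attach t (fun i => w' i • z i), Finset.sum_apply]
      refine Finset.sum_congr rfl fun i _ => ?_
      rw [Pi.smul_apply, smul_eq_mul, ← hφs i.1 i.2]
      rfl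
    have haqdef : a ⟨q, hq⟩ = ‖T q.1 - T q.2‖ ^ p := rfl
    rw [haqdef, hsq] at h
    exact h

end Pietsch

namespace Pietsch
variable {n : ℕ} {X : Fin n → Type*} [∀ i, NormedAddCommGroup (X i)] [∀ i, NormedSpace ℝ (X i)]
variable {Y : Type*} [NormedAddCommGroup Y] [NormedSpace ℝ Y]

lemma functional_abs_le_norm {B : Type*} [TopologicalSpace B] [CompactSpace B]
    (Λ : C(B, ℝ) → ℝ) (hadd : ∀ f g, Λ (f + g) = Λ f + Λ g)
    (hsmul : ∀ (r : ℝ) (f), Λ (r • f) = r * Λ f)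
    (hpos : ∀ f, (∀ x, 0 ≤ f x) → 0 ≤ Λ f) (hone : Λ 1 = 1)
    (f : C(B, ℝ)) : |Λ f| ≤ ‖f‖ := by
  have hmono : ∀ g h : C(B, ℝ), (∀ x, g x ≤ h x) → Λ g ≤ Λ h := by
    intro g h hle
    have h1 : Λ h = Λ g + Λ (h - g) := by
      rw [← hadd]
      congr 1
      exact (add_sub_cancel g h).symm ▸ by abel
    have h2 : 0 ≤ Λ (h - g) := hpos _ fun x => by
      rw [ContinuousMap.sub_apply]; linarith [hle x]
    linarith
  have hneg : Λ (-f) = -Λ f := by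
    have := hsmul (-1) f
    rwa [neg_one_smul, neg_one_mul] at this
  have hup : Λ f ≤ ‖f‖ := by
    have h1 : Λ f ≤ Λ (‖f‖ • 1) := hmono _ _ fun x => by
      rw [ContinuousMap.smul_apply, ContinuousMap.one_apply, smul_eq_mul, mul_one]
      exact (le_abs_self _).trans (f.norm_coe_le_norm x)
    rwa [hsmul, hone, mul_one] at h1
  have hdown : Λ (-f) ≤ ‖f‖ := by
    have h1 : Λ (-f) ≤ Λ (‖f‖ • 1) := hmono _ _ fun x => by
      rw [ContinuousMap.smul_apply, ContinuousMap.one_apply, smul_eq_mul, mul_one,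
        ContinuousMap.neg_apply]
      exact (neg_le_abs _).trans (f.norm_coe_le_norm x)
    rwa [hsmul, hone, mul_one] at h1
  rw [hneg] at hdown
  exact abs_le.2 ⟨by linarith, hup⟩

lemma limit_functional {p c : ℝ} (hp : 1 ≤ p) (hc : 0 ≤ c)
    {T : ContinuousMultilinearMap ℝ X Y} (hT : LipschitzPSumming p c T) :
    ∃ L : C(FormBall X, ℝ) → ℝ,
      (∀ f g, L (f + g) = L f + L g) ∧
      (∀ (r : ℝ) (f), L (r • f) = r * L f) ∧
      (∀ f, (∀ x, 0 ≤ f x) → 0 ≤ L f) ∧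
      (L 1 = 1) ∧
      (∀ q : (((i : Fin n) → X i)) × (((i : Fin n) → X i)),
        ‖T q.1 - T q.2‖ ^ p ≤ L (Gmap p c hp q)) := by
  classical
  set DT := Finset ((((i : Fin n) → X i)) × (((i : Fin n) → X i))) × ℕ with hDT
  have hex : ∀ d : DT,
      ∃ Λ : C(FormBall X, ℝ) → ℝ,
        (∀ f g, Λ (f + g) = Λ f + Λ g) ∧
        (∀ (r : ℝ) (f), Λ (r • f) = r * Λ f) ∧
        (∀ f, (∀ x, 0 ≤ f x) → 0 ≤ Λ f) ∧
        (Λ 1 = 1) ∧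
        (∀ q ∈ d.1, ‖T q.1 - T q.2‖ ^ p ≤ Λ (Gmap p c hp q) + 1/(d.2+1)) := by
    intro d
    exact finite_functional hp hc hT d.1 (by positivity)
  choose Λs h1 h2 h3 h4 h5 using hex
  set K : Set (C(FormBall X, ℝ) → ℝ) :=
    Set.pi Set.univ (fun f => Set.Icc (-‖f‖) ‖f‖) with hK
  have hKc : IsCompact K := isCompact_univ_pi fun f => isCompact_Icc
  have hmem : ∀ d, Λs d ∈ K := by
    intro d f _
    exact abs_le.1 (functional_abs_le_norm (Λs d) (h1 d) (h2 d) (h3 d) (h4 d) f)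
  haveI : Nonempty DT := ⟨(∅, 0)⟩
  set 𝒰 : Ultrafilter DT := Ultrafilter.of Filter.atTop with h𝒰
  have hU : (𝒰 : Filter DT) ≤ Filter.atTop := Ultrafilter.of_le _
  have hle : (𝒰.map Λs : Filter _) ≤ Filter.principal K := by
    rw [Filter.le_principal_iff]
    exact Filter.mem_map.2 (Filter.univ_mem' hmem)
  obtain ⟨L, hLK, hLle⟩ := hKc.ultrafilter_le_nhds (𝒰.map Λs) hle
  have hpass : ∀ (C : Set (C(FormBall X, ℝ) → ℝ)), IsClosed C →
      (∀ᶠ d in (𝒰 : Filter DT), Λs d ∈ C) → L ∈ C := by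
    intro C hC hev
    by_contra hnot
    have hc1 : Cᶜ ∈ (𝒰.map Λs : Filter _) := hLle (hC.isOpen_compl.mem_nhds hnot)
    have hc2 : C ∈ (𝒰.map Λs : Filter _) := Filter.mem_map.2 hev
    have := Filter.inter_mem hc1 hc2
    rw [Set.compl_inter_self] at this
    exact Filter.empty_notMem _ this
  refine ⟨L, ?_, ?_, ?_, ?_, ?_⟩
  · intro f g
    exact hpass {L' | L' (f + g) = L' f + L' g}
      (isClosed_eq (continuous_apply (f + g))
        ((continuous_apply f).add (continuous_apply g)))
      (Filter.Eventually.of_forall fun d => h1 d f g)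
  · intro r f
    exact hpass {L' | L' (r • f) = r * L' f}
      (isClosed_eq (continuous_apply (r • f)) (continuous_const.mul (continuous_apply f)))
      (Filter.Eventually.of_forall fun d => h2 d r f)
  · intro f hf
    exact hpass {L' | 0 ≤ L' f}
      (isClosed_le continuous_const (continuous_apply f))
      (Filter.Eventually.of_forall fun d => h3 d f hf)
  · exact hpass {L' | L' 1 = 1}
      (isClosed_eq (continuous_apply 1) continuous_const)
      (Filter.Eventually.of_forall fun d => h4 d)
  · intro q
    refine le_of_forall_pos_le_add ?_
    intro δ hδ
    obtain ⟨m₀, hm₀⟩ := exists_nat_one_div_lt hδ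
    refine hpass {L' | ‖T q.1 - T q.2‖ ^ p ≤ L' (Gmap p c hp q) + δ}
      (isClosed_le continuous_const ((continuous_apply _).add continuous_const)) ?_
    have htail : Set.Ici (({q}, m₀) : DT) ∈ (𝒰 : Filter DT) :=
      hU (Filter.Ici_mem_atTop _)
    refine Filter.mem_of_superset htail ?_
    intro d hd
    rw [Set.mem_Ici, Prod.le_def] at hd
    have hqd : q ∈ d.1 := Finset.singleton_subset_iff.1 hd.1
    refine le_trans (h5 d q hqd) ?_
    have hcast : ((m₀:ℝ)+1) ≤ ((d.2:ℝ)+1) := by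
      have : (m₀:ℝ) ≤ (d.2:ℝ) := Nat.cast_le.2 hd.2
      linarith
    have : (1:ℝ)/(d.2+1) ≤ 1/(m₀+1) := one_div_le_one_div_of_le (by positivity) hcast
    linarith [hm₀.le]

end Pietsch

namespace Pietsch

section MeasureConstruction
variable {B : Type*} [TopologicalSpace B] [CompactSpace B] [T2Space B]
  [MeasurableSpace B] [BorelSpace B]

lemma exists_rep_measure (L : C(B, ℝ) → ℝ)
    (hadd : ∀ f g, L (f + g) = L f + L g)
    (hsmul : ∀ (r : ℝ) (f), L (r • f) = r * L f)
    (hpos : ∀ f, (∀ x, 0 ≤ f x) → 0 ≤ L f)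
    (hone : L 1 = 1) :
    ∃ μ : Measure B, IsProbabilityMeasure μ ∧
      ∀ f : C(B, ℝ), (∀ x, 0 ≤ f x) → L f ≤ ∫ x, f x ∂μ := by
  classical
  have htnn : ∀ {a b : ℝ}, a ≤ b → a.toNNReal ≤ b.toNNReal := by
    intro a b h; exact Real.toNNReal_mono h
  have hmono : ∀ g h : C(B, ℝ), (∀ x, g x ≤ h x) → L g ≤ L h := by
    intro g h hle
    have h1 : L h = L g + L (h - g) := by
      rw [← hadd, add_sub_cancel]
    have h2 : 0 ≤ L (h - g) := hpos _ fun x => by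
      rw [ContinuousMap.sub_apply]; linarith [hle x]
    linarith
  set feas : Set B → Set C(B, ℝ) :=
    fun K => {g | (∀ x, 0 ≤ g x) ∧ ∀ x ∈ K, 1 ≤ g x} with hfeas
  set lam : Set B → ℝ := fun K => sInf (L '' feas K) with hlamdef
  have hfeas_one : ∀ K, (1 : C(B, ℝ)) ∈ feas K :=
    fun K => ⟨fun x => by simp, fun x _ => by simp⟩
  have hne : ∀ K : Set B, (L '' feas K).Nonempty := fun K => ⟨L 1, 1, hfeas_one K, rfl⟩
  have hbdd : ∀ K : Set B, BddBelow (L '' feas K) := by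
    intro K
    refine ⟨0, ?_⟩
    rintro _ ⟨g, hg, rfl⟩
    exact hpos g hg.1
  have hlam_nonneg : ∀ K, 0 ≤ lam K := fun K =>
    le_csInf (hne K) (by rintro _ ⟨g, hg, rfl⟩; exact hpos g hg.1)
  have hlam_le : ∀ (K : Set B) (g : C(B, ℝ)), g ∈ feas K → lam K ≤ L g :=
    fun K g hg => csInf_le (hbdd K) ⟨g, hg, rfl⟩
  have hlam_mono : ∀ K₁ K₂ : Set B, K₁ ⊆ K₂ → lam K₁ ≤ lam K₂ := by
    intro K₁ K₂ hsub
    refine le_csInf (hne K₂) ?_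
    rintro _ ⟨g, hg, rfl⟩
    exact hlam_le K₁ g ⟨hg.1, fun x hx => hg.2 x (hsub hx)⟩
  have hlam_univ : lam Set.univ = 1 := by
    apply le_antisymm
    · have := hlam_le Set.univ 1 (hfeas_one _)
      rwa [hone] at this
    · refine le_csInf (hne _) ?_
      rintro _ ⟨g, hg, rfl⟩
      have h1 : L 1 ≤ L g := hmono _ _ fun x => by
        rw [ContinuousMap.one_apply]; exact hg.2 x (Set.mem_univ x)
      rwa [hone] at h1
  have hnear : ∀ (K : Set B) (ε : ℝ), 0 < ε → ∃ g ∈ feas K, L g < lam K + ε := by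
    intro K ε hε
    obtain ⟨x, hx, hlt⟩ := exists_lt_of_csInf_lt (hne K)
      (lt_add_of_pos_right (lam K) hε)
    obtain ⟨g, hg, rfl⟩ := hx
    exact ⟨g, hg, hlt⟩
  have hsubadd : ∀ K₁ K₂ : Set B, lam (K₁ ∪ K₂) ≤ lam K₁ + lam K₂ := by
    intro K₁ K₂
    refine le_of_forall_pos_le_add ?_
    intro ε hε
    obtain ⟨g₁, hg₁, hL₁⟩ := hnear K₁ (ε/2) (by linarith)
    obtain ⟨g₂, hg₂, hL₂⟩ := hnear K₂ (ε/2) (by linarith)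
    have hg : g₁ + g₂ ∈ feas (K₁ ∪ K₂) := by
      constructor
      · intro x
        rw [ContinuousMap.add_apply]
        exact add_nonneg (hg₁.1 x) (hg₂.1 x)
      · intro x hx
        rw [ContinuousMap.add_apply]
        rcases hx with hx | hx
        · linarith [hg₁.2 x hx, hg₂.1 x]
        · linarith [hg₂.2 x hx, hg₁.1 x]
    have h := hlam_le _ _ hg
    rw [hadd] at h
    linarith
  have hdisj : ∀ K₁ K₂ : Set B, IsClosed K₁ → IsClosed K₂ → Disjoint K₁ K₂ →
      lam K₁ + lam K₂ ≤ lam (K₁ ∪ K₂) := by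
    intro K₁ K₂ hc₁ hc₂ hd
    obtain ⟨w, hw0, hw1, hw01⟩ := exists_continuous_zero_one_of_isClosed hc₂ hc₁ hd.symm
    refine le_csInf (hne _) ?_
    rintro _ ⟨g, hg, rfl⟩
    have h1 : g * w ∈ feas K₁ := by
      constructor
      · intro x
        rw [ContinuousMap.mul_apply]
        exact mul_nonneg (hg.1 x) (hw01 x).1
      · intro x hx
        rw [ContinuousMap.mul_apply, hw1 hx]
        simpa using hg.2 x (Set.mem_union_left _ hx)
    have h2 : g * (1 - w) ∈ feas K₂ := by
      constructor
      · intro x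
        rw [ContinuousMap.mul_apply, ContinuousMap.sub_apply, ContinuousMap.one_apply]
        exact mul_nonneg (hg.1 x) (by linarith [(hw01 x).2])
      · intro x hx
        rw [ContinuousMap.mul_apply, ContinuousMap.sub_apply, ContinuousMap.one_apply, hw0 hx]
        simpa using hg.2 x (Set.mem_union_right _ hx)
    have hsum : g * w + g * (1 - w) = g := by ring
    have h3 : lam K₁ + lam K₂ ≤ L (g * w) + L (g * (1 - w)) :=
      add_le_add (hlam_le _ _ h1) (hlam_le _ _ h2)
    rw [← hadd, hsum] at h3
    exact h3
  -- the content
  set cont : Content B :=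
    { toFun := fun K => (lam K.1).toNNReal
      mono' := fun K₁ K₂ h => htnn (hlam_mono _ _ h)
      sup_disjoint' := by
        intro K₁ K₂ hd hcl₁ hcl₂
        have heq : lam (K₁.1 ∪ K₂.1) = lam K₁.1 + lam K₂.1 :=
          le_antisymm (hsubadd _ _) (hdisj _ _ hcl₁ hcl₂ hd)
        show (lam (K₁.1 ∪ K₂.1)).toNNReal = _
        rw [heq, Real.toNNReal_add (hlam_nonneg _) (hlam_nonneg _)]
      sup_le' := by
        intro K₁ K₂
        show (lam (K₁.1 ∪ K₂.1)).toNNReal ≤ _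
        refine le_trans (htnn (hsubadd K₁.1 K₂.1)) ?_
        rw [Real.toNNReal_add (hlam_nonneg _) (hlam_nonneg _)] } with hcont
  set μ : Measure B := cont.measure with hμ
  have huniv : μ Set.univ = 1 := by
    rw [hμ, Content.measure_apply _ MeasurableSet.univ,
      cont.outerMeasure_of_isOpen Set.univ isOpen_univ,
      cont.innerContent_of_isCompact isCompact_univ isOpen_univ]
    show ((lam Set.univ).toNNReal : ℝ≥0∞) = 1
    rw [hlam_univ]
    simp
  haveI hprob : IsProbabilityMeasure μ := ⟨huniv⟩
  refine ⟨μ, hprob, ?_⟩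
  -- bound for compacts
  have hKbound : ∀ (K : Set B), IsCompact K → lam K ≤ (μ K).toReal := by
    intro K hK
    have hKm : MeasurableSet K := hK.isClosed.measurableSet
    have h1 : (cont ⟨K, hK⟩ : ℝ≥0∞) ≤ cont.outerMeasure K :=
      cont.le_outerMeasure_compacts ⟨K, hK⟩
    rw [← Content.measure_apply cont hKm] at h1
    have hfin : cont.measure K ≠ ⊤ := by
      refine ne_of_lt (lt_of_le_of_lt (measure_mono (Set.subset_univ K)) ?_)
      show μ Set.univ < ⊤
      rw [huniv]; exact ENNReal.one_lt_top
    have h2 := ENNReal.toReal_mono hfin h1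
    rwa [show ((cont ⟨K, hK⟩ : ℝ≥0∞)).toReal = lam K by
      show (((lam K).toNNReal : ℝ≥0∞)).toReal = lam K
      rw [ENNReal.coe_toReal, Real.coe_toNNReal _ (hlam_nonneg K)]] at h2
  -- main integral bound
  intro f hf
  refine le_of_forall_pos_le_add ?_
  intro ε hε
  set δ : ℝ := ε/2 with hδdef
  have hδ : 0 < δ := by rw [hδdef]; linarith
  set N : ℕ := ⌈‖f‖ / δ⌉₊ with hN
  set ε' : ℝ := ε / (2*(δ*N+1)) with hε'
  have hδN : (0:ℝ) ≤ δ * N := by positivity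
  have hε'pos : 0 < ε' := by rw [hε']; positivity
  set Kset : ℕ → Set B := fun j => {y | ((j:ℝ)+1) * δ ≤ f y} with hKset
  have hKcl : ∀ j, IsClosed (Kset j) := fun j =>
    isClosed_le continuous_const f.continuous
  have hKcomp : ∀ j, IsCompact (Kset j) := fun j => (hKcl j).isCompact
  have hKms : ∀ j, MeasurableSet (Kset j) := fun j => (hKcl j).measurableSet
  set m : B → ℕ := fun x => min N ⌊f x / δ⌋₊ with hm
  have hfloor : ∀ (x : B) (j : ℕ), j < m x → ((j:ℝ)+1) * δ ≤ f x := by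
    intro x j hj
    have h1 : j + 1 ≤ ⌊f x / δ⌋₊ := Nat.succ_le_of_lt (lt_of_lt_of_le hj (min_le_right _ _))
    have h2 : ((j+1 : ℕ):ℝ) ≤ f x / δ := (Nat.le_floor_iff (div_nonneg (hf x) hδ.le)).1 h1
    rw [← le_div_iff₀ hδ]
    push_cast at h2 ⊢
    linarith
  have hfle : ∀ x : B, f x ≤ δ * m x + δ := by
    intro x
    rcases lt_or_ge (⌊f x / δ⌋₊) N with hlt | hge
    · have hmx : m x = ⌊f x / δ⌋₊ := min_eq_right hlt.le
      have h1 : f x / δ < ⌊f x / δ⌋₊ + 1 := Nat.lt_floor_add_one _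
      have h2 : f x < (⌊f x / δ⌋₊ + 1 : ℝ) * δ := by
        rw [← div_lt_iff₀ hδ]; exact h1
      rw [hmx]
      push_cast at h2 ⊢
      linarith
    · have hmx : m x = N := min_eq_left hge
      have h1 : ‖f‖ / δ ≤ N := le_trans (Nat.le_ceil _) (by rw [hN])
      have h2 : f x ≤ ‖f‖ := (le_abs_self _).trans (f.norm_coe_le_norm x)
      have h3 : ‖f‖ ≤ (N:ℝ) * δ := by rw [← div_le_iff₀ hδ]; exact h1
      rw [hmx]
      linarith
  have hmfloor : ∀ x : B, (m x : ℝ) * δ ≤ f x := by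
    intro x
    have h1 : (m x : ℝ) ≤ ⌊f x / δ⌋₊ := Nat.cast_le.2 (min_le_right _ _)
    have h2 : (⌊f x / δ⌋₊ : ℝ) ≤ f x / δ := Nat.floor_le (div_nonneg (hf x) hδ.le)
    rw [← le_div_iff₀ hδ]
    linarith
  -- Step A
  obtain ⟨gs, hgs, hgsL⟩ : ∃ gs : ℕ → C(B, ℝ), (∀ j, gs j ∈ feas (Kset j)) ∧
      (∀ j, L (gs j) ≤ lam (Kset j) + ε') := by
    have h := fun j : ℕ => hnear (Kset j) ε' hε'pos
    choose gs h1 h2 using h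
    exact ⟨gs, h1, fun j => (h2 j).le⟩
  have hcount : ∀ (x : B) (h : ℕ → ℝ), (∀ j, 0 ≤ h j) →
      (∀ j : ℕ, ((j:ℝ)+1) * δ ≤ f x → 1 ≤ h j) →
      (m x : ℝ) ≤ ∑ j ∈ Finset.range N, h j := by
    intro x h hnn h1
    have hsub : Finset.range (m x) ⊆ Finset.range N :=
      Finset.range_subset_range.2 (min_le_left _ _)
    calc (m x : ℝ) = ∑ _j ∈ Finset.range (m x), (1:ℝ) := by simp
      _ ≤ ∑ j ∈ Finset.range (m x), h j :=
          Finset.sum_le_sum fun j hj => h1 j (hfloor x j (Finset.mem_range.1 hj))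
      _ ≤ ∑ j ∈ Finset.range N, h j :=
          Finset.sum_le_sum_of_subset_of_nonneg hsub fun j _ _ => hnn j
  have hfb : ∀ x, f x ≤ δ * (1 + ∑ j ∈ Finset.range N, gs j x) := by
    intro x
    have h1 := hcount x (fun j => gs j x) (fun j => (hgs j).1 x) (fun j hj => (hgs j).2 x hj)
    have := hfle x
    nlinarith [hδ.le]
  set Gc : C(B, ℝ) := δ • ((1 : C(B, ℝ)) + ∑ j ∈ Finset.range N, gs j) with hGc
  have hLfG : L f ≤ L Gc := by
    refine hmono _ _ fun x => ?_
    rw [hGc, ContinuousMap.smul_apply, ContinuousMap.add_apply, ContinuousMap.one_apply,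
      ContinuousMap.sum_apply, smul_eq_mul]
    exact hfb x
  set Llin : C(B, ℝ) →+ ℝ := AddMonoidHom.mk' L hadd with hLlin
  have hLGc : L Gc = δ * (1 + ∑ j ∈ Finset.range N, L (gs j)) := by
    rw [hGc, hsmul]
    congr 1
    have : L ((1 : C(B, ℝ)) + ∑ j ∈ Finset.range N, gs j) =
        Llin 1 + Llin (∑ j ∈ Finset.range N, gs j) := hadd _ _
    rw [this, map_sum]
    show (L 1) + _ = _
    rw [hone]
    rfl
  -- Step B
  have hint_f : Integrable f μ :=
    f.continuous.integrable_of_hasCompactSupport (isClosed_tsupport _).isCompact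
  have hint_j : ∀ j, Integrable (fun x => δ * (Kset j).indicator (fun _ => (1:ℝ)) x) μ :=
    fun j => ((integrable_const (1:ℝ)).indicator (hKms j)).const_mul δ
  have hptB : ∀ x, ∑ j ∈ Finset.range N, δ * (Kset j).indicator (fun _ => (1:ℝ)) x ≤ f x := by
    intro x
    have hmN : m x ≤ N := min_le_left _ _
    rw [← Finset.sum_range_add_sum_Ico _ hmN]
    have hA : ∀ j ∈ Finset.range (m x), δ * (Kset j).indicator (fun _ => (1:ℝ)) x = δ := by
      intro j hj
      rw [Set.indicator_of_mem (show x ∈ Kset j from hfloor x j (Finset.mem_range.1 hj)), mul_one]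
    have hB : ∀ j ∈ Finset.Ico (m x) N, δ * (Kset j).indicator (fun _ => (1:ℝ)) x = 0 := by
      intro j hj
      obtain ⟨hj1, hj2⟩ := Finset.mem_Ico.1 hj
      have hflt : ⌊f x / δ⌋₊ < N := by
        by_contra hcon
        push_neg at hcon
        have : m x = N := min_eq_left hcon
        omega
      have hmx : m x = ⌊f x / δ⌋₊ := min_eq_right hflt.le
      have hnotin : x ∉ Kset j := by
        intro hxin
        have hle2 : ((j:ℝ)+1) * δ ≤ f x := hxin
        have h4 : ((j+1 : ℕ):ℝ) ≤ f x / δ := by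
          rw [le_div_iff₀ hδ]
          push_cast
          linarith
        have h5 : (j+1 : ℕ) ≤ ⌊f x / δ⌋₊ := (Nat.le_floor_iff (div_nonneg (hf x) hδ.le)).2 h4
        omega
      rw [Set.indicator_of_notMem hnotin, mul_zero]
    rw [Finset.sum_congr rfl hA, Finset.sum_congr rfl hB, Finset.sum_const,
      Finset.card_range, nsmul_eq_mul, Finset.sum_const, smul_zero, add_zero]
    linarith [hmfloor x]
  have hInt : ∑ j ∈ Finset.range N, δ * (μ (Kset j)).toReal ≤ ∫ x, f x ∂μ := by
    have hgint : Integrable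
        (fun x => ∑ j ∈ Finset.range N, δ * (Kset j).indicator (fun _ => (1:ℝ)) x) μ :=
      integrable_finset_sum _ fun j _ => hint_j j
    have hle := integral_mono hgint hint_f hptB
    rw [integral_finset_sum _ (fun j _ => hint_j j)] at hle
    refine le_trans (le_of_eq (Finset.sum_congr rfl fun j _ => ?_)) hle
    rw [integral_const_mul, integral_indicator_const (1:ℝ) (hKms j), smul_eq_mul, mul_one, measureReal_def]
  have hsumlam : ∑ j ∈ Finset.range N, L (gs j) ≤
      ∑ j ∈ Finset.range N, ((μ (Kset j)).toReal + ε') :=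
    Finset.sum_le_sum fun j _ =>
      le_trans (hgsL j) (by linarith [hKbound (Kset j) (hKcomp j)])
  have hLf2 : L f ≤ δ * (1 + ∑ j ∈ Finset.range N, ((μ (Kset j)).toReal + ε')) := by
    refine le_trans hLfG (le_of_eq hLGc |>.trans ?_)
    exact mul_le_mul_of_nonneg_left (by linarith) hδ.le
  have hexp : δ * (1 + ∑ j ∈ Finset.range N, ((μ (Kset j)).toReal + ε')) =
      δ + (∑ j ∈ Finset.range N, δ * (μ (Kset j)).toReal) + δ * N * ε' := by
    rw [Finset.sum_add_distrib, Finset.sum_const, Finset.card_range, nsmul_eq_mul,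
      mul_add, mul_add, Finset.mul_sum]
    ring
  have hfinal : δ * (N:ℝ) * ε' ≤ ε/2 := by
    have hpos1 : (0:ℝ) < δ*(N:ℝ)+1 := by linarith
    have h1 : δ * (N:ℝ) * ε' ≤ (δ*(N:ℝ)+1) * ε' := by nlinarith [hε'pos.le]
    have h2 : (δ*(N:ℝ)+1) * ε' = ε/2 := by
      rw [hε']
      field_simp
    linarith
  rw [hexp] at hLf2
  have : L f ≤ δ + (∫ x, f x ∂μ) + ε/2 := by linarith
  rw [hδdef] at this
  linarith

end MeasureConstruction
end Pietsch

namespace Pietsch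
variable {n : ℕ} {X : Fin n → Type*} [∀ i, NormedAddCommGroup (X i)] [∀ i, NormedSpace ℝ (X i)]
variable {Y : Type*} [NormedAddCommGroup Y] [NormedSpace ℝ Y]

lemma exists_pietsch_measure {p c : ℝ} (hp : 1 ≤ p) (hc : 0 ≤ c)
    {T : ContinuousMultilinearMap ℝ X Y} (hT : LipschitzPSumming p c T) :
    ∃ μ : Measure (FormBall X), IsProbabilityMeasure μ ∧
      ∀ u v : (i : Fin n) → X i,
        ‖T u - T v‖ ^ p ≤ c ^ p * ∫ φ, |φ.1 u - φ.1 v| ^ p ∂μ := by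
  obtain ⟨L, h1, h2, h3, h4, h5⟩ := limit_functional hp hc hT
  obtain ⟨μ, hμ, hint⟩ := exists_rep_measure L h1 h2 h3 h4
  refine ⟨μ, hμ, fun u v => ?_⟩
  calc ‖T u - T v‖ ^ p ≤ L (Gmap p c hp (u, v)) := h5 (u, v)
    _ ≤ ∫ φ, (Gmap p c hp (u, v)) φ ∂μ :=
        hint _ (fun φ => Gmap_nonneg p c hp hc _ φ)
    _ = c ^ p * ∫ φ, |φ.1 u - φ.1 v| ^ p ∂μ := by
        simp only [Gmap_apply]
        exact integral_const_mul _ _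

end Pietsch

theorem lipschitzPSumming_factorization_aux {n : ℕ} {X : Fin n → Type*}
    [∀ i, NormedAddCommGroup (X i)] [∀ i, NormedSpace ℝ (X i)] [∀ i, CompleteSpace (X i)]
    {Y : Type*} [NormedAddCommGroup Y] [NormedSpace ℝ Y] [CompleteSpace Y]
    (p : ℝ) (hp : 1 ≤ p) (c : ℝ) (hc : 0 ≤ c) (T : ContinuousMultilinearMap ℝ X Y)
    (hT : LipschitzPSumming p c T) :
    ∃ (μ : Measure (FormBall X)) (_ : IsProbabilityMeasure μ)
      (g : ((i : Fin n) → X i) → Lp ℝ (ENNReal.ofReal p) μ)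
      (htilde : Lp ℝ (ENNReal.ofReal p) μ → lp (fun _ : DualBall Y => ℝ) ⊤),
        (∀ u : (i : Fin n) → X i, ⇑(g u) =ᵐ[μ] fun φ : FormBall X => φ.1 u) ∧
        (∀ f₁ f₂ : Lp ℝ (ENNReal.ofReal p) μ, ‖htilde f₁ - htilde f₂‖ ≤ c * ‖f₁ - f₂‖) ∧
        (∀ (u : (i : Fin n) → X i) (y : DualBall Y), htilde (g u) y = y.1 (T u)) := by
  classical
  have hp0 : (0:ℝ) < p := lt_of_lt_of_le one_pos hp
  obtain ⟨μ, hμ, hpietsch⟩ := Pietsch.exists_pietsch_measure hp hc hT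
  haveI := hμ
  haveI hfact : Fact (1 ≤ ENNReal.ofReal p) := ⟨ENNReal.one_le_ofReal.2 hp⟩
  have hp'0 : ENNReal.ofReal p ≠ 0 := by
    simp only [ne_eq, ENNReal.ofReal_eq_zero, not_le]
    exact hp0
  have hp't : ENNReal.ofReal p ≠ ⊤ := ENNReal.ofReal_ne_top
  haveI : Nonempty ((i : Fin n) → X i) := ⟨fun _ => 0⟩
  -- the map g
  have hmem : ∀ u : (i : Fin n) → X i,
      MemLp (fun φ : FormBall X => φ.1 u) (ENNReal.ofReal p) μ := by
    intro u
    refine MemLp.of_bound (Pietsch.continuous_eval u).aestronglyMeasurable (∏ i, ‖u i‖) ?_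
    exact Filter.Eventually.of_forall fun φ => by
      rw [Real.norm_eq_abs]; exact Pietsch.abs_apply_le φ u
  set g : ((i : Fin n) → X i) → Lp ℝ (ENNReal.ofReal p) μ :=
    fun u => (hmem u).toLp _ with hgdef
  have hgae : ∀ u, ⇑(g u) =ᵐ[μ] fun φ : FormBall X => φ.1 u := fun u => (hmem u).coeFn_toLp
  -- the key inequality
  have hkey : ∀ u v, ‖T u - T v‖ ≤ c * ‖g u - g v‖ := by
    intro u v
    have hI0 : 0 ≤ ∫ φ, |φ.1 u - φ.1 v| ^ p ∂μ :=
      integral_nonneg fun φ => Real.rpow_nonneg (abs_nonneg _) _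
    have hsub : g u - g v = ((hmem u).sub (hmem v)).toLp _ :=
      ((hmem u).toLp_sub (hmem v)).symm
    have hnorm : ‖g u - g v‖ = (∫ φ, |φ.1 u - φ.1 v| ^ p ∂μ) ^ p⁻¹ := by
      rw [hsub, Lp.norm_toLp,
        MemLp.eLpNorm_eq_integral_rpow_norm hp'0 hp't ((hmem u).sub (hmem v)),
        ENNReal.toReal_ofReal (Real.rpow_nonneg (integral_nonneg fun φ =>
          Real.rpow_nonneg (norm_nonneg _) _) _)]
      have hpt : (ENNReal.ofReal p).toReal = p := ENNReal.toReal_ofReal hp0.le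
      congr 1
      · rw [hpt]
        refine integral_congr_ae (Filter.Eventually.of_forall fun φ => ?_)
        simp [Pi.sub_apply, Real.norm_eq_abs]
      · rw [hpt]
    have h1 := Real.rpow_le_rpow (Real.rpow_nonneg (norm_nonneg _) _)
      (hpietsch u v) (inv_nonneg.2 hp0.le)
    rw [Real.rpow_rpow_inv (norm_nonneg _) hp0.ne',
      Real.mul_rpow (Real.rpow_nonneg hc _) hI0,
      Real.rpow_rpow_inv hc hp0.ne'] at h1
    rw [hnorm]
    exact h1
  -- construct htilde via coordinatewise McShane extension
  set u₀ : (i : Fin n) → X i := fun _ => 0 with hu₀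
  set H : Lp ℝ (ENNReal.ofReal p) μ → DualBall Y → ℝ :=
    fun f y => ⨅ u : (i : Fin n) → X i, (y.1 (T u) + c * ‖f - g u‖) with hH
  have hstep : ∀ (f : Lp ℝ (ENNReal.ofReal p) μ) (y : DualBall Y)
      (u u' : (i : Fin n) → X i),
      y.1 (T u) - c * ‖f - g u‖ ≤ y.1 (T u') + c * ‖f - g u'‖ := by
    intro f y u u'
    have h1 : |y.1 (T u) - y.1 (T u')| ≤ ‖T u - T u'‖ := by
      rw [← map_sub, ← Real.norm_eq_abs]
      calc ‖y.1 (T u - T u')‖ ≤ ‖y.1‖ * ‖T u - T u'‖ := y.1.le_opNorm _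
        _ ≤ 1 * ‖T u - T u'‖ := mul_le_mul_of_nonneg_right y.2 (norm_nonneg _)
        _ = _ := one_mul _
    have h2 : ‖T u - T u'‖ ≤ c * ‖g u - g u'‖ := hkey u u'
    have h3 : ‖g u - g u'‖ ≤ ‖f - g u‖ + ‖f - g u'‖ := by
      calc ‖g u - g u'‖ = ‖(g u - f) + (f - g u')‖ := by rw [sub_add_sub_cancel]
        _ ≤ ‖g u - f‖ + ‖f - g u'‖ := norm_add_le _ _
        _ = ‖f - g u‖ + ‖f - g u'‖ := by rw [norm_sub_rev]
    have h4 : c * ‖g u - g u'‖ ≤ c * ‖f - g u‖ + c * ‖f - g u'‖ := by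
      rw [← mul_add]
      exact mul_le_mul_of_nonneg_left h3 hc
    have h5 := (abs_le.1 h1).2
    linarith
  have hbddH : ∀ (f) (y : DualBall Y),
      BddBelow (Set.range fun u => y.1 (T u) + c * ‖f - g u‖) := by
    intro f y
    refine ⟨y.1 (T u₀) - c * ‖f - g u₀‖, ?_⟩
    rintro _ ⟨u', rfl⟩
    exact hstep f y u₀ u'
  have hlowH : ∀ (f) (y : DualBall Y), y.1 (T u₀) - c * ‖f - g u₀‖ ≤ H f y :=
    fun f y => le_ciInf fun u' => hstep f y u₀ u'
  have hupH : ∀ (f) (y : DualBall Y), H f y ≤ y.1 (T u₀) + c * ‖f - g u₀‖ :=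
    fun f y => ciInf_le (hbddH f y) u₀
  have hHg : ∀ (u) (y : DualBall Y), H (g u) y = y.1 (T u) := by
    intro u y
    apply le_antisymm
    · have h1 := ciInf_le (hbddH (g u) y) u
      simpa using h1
    · refine le_ciInf fun u' => ?_
      have h1 := hstep (g u) y u u'
      simpa using h1
  have habsy : ∀ (y : DualBall Y) (z : Y), |y.1 z| ≤ ‖z‖ := by
    intro y z
    rw [← Real.norm_eq_abs]
    calc ‖y.1 z‖ ≤ ‖y.1‖ * ‖z‖ := y.1.le_opNorm _
      _ ≤ 1 * ‖z‖ := mul_le_mul_of_nonneg_right y.2 (norm_nonneg _)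
      _ = _ := one_mul _
  have hmemH : ∀ f, Memℓp (H f) ⊤ := by
    intro f
    apply memℓp_infty
    refine ⟨‖T u₀‖ + c * ‖f - g u₀‖, ?_⟩
    rintro _ ⟨y, rfl⟩
    show ‖H f y‖ ≤ ‖T u₀‖ + c * ‖f - g u₀‖
    rw [Real.norm_eq_abs, abs_le]
    constructor
    · have := hlowH f y
      have h2 := (abs_le.1 (habsy y (T u₀))).1
      linarith
    · have := hupH f y
      have h2 := (abs_le.1 (habsy y (T u₀))).2
      linarith
  set htilde : Lp ℝ (ENNReal.ofReal p) μ → lp (fun _ : DualBall Y => ℝ) ⊤ :=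
    fun f => ⟨H f, hmemH f⟩ with hhtilde
  have hHlip : ∀ f₁ f₂ y, H f₁ y ≤ H f₂ y + c * ‖f₁ - f₂‖ := by
    intro f₁ f₂ y
    rw [hH]
    dsimp only
    rw [ciInf_add (hbddH f₂ y)]
    refine ciInf_mono (hbddH f₁ y) fun u => ?_
    have h1 : ‖f₁ - g u‖ ≤ ‖f₂ - g u‖ + ‖f₁ - f₂‖ := by
      calc ‖f₁ - g u‖ = ‖(f₁ - f₂) + (f₂ - g u)‖ := by rw [sub_add_sub_cancel]
        _ ≤ ‖f₁ - f₂‖ + ‖f₂ - g u‖ := norm_add_le _ _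
        _ = ‖f₂ - g u‖ + ‖f₁ - f₂‖ := add_comm _ _
    have h2 : c * ‖f₁ - g u‖ ≤ c * ‖f₂ - g u‖ + c * ‖f₁ - f₂‖ := by
      rw [← mul_add]
      exact mul_le_mul_of_nonneg_left h1 hc
    linarith
  refine ⟨μ, hμ, g, htilde, hgae, ?_, ?_⟩
  · intro f₁ f₂
    refine lp.norm_le_of_forall_le (mul_nonneg hc (norm_nonneg _)) ?_
    intro y
    have hcoe : (htilde f₁ - htilde f₂ : lp (fun _ : DualBall Y => ℝ) ⊤) y =
        H f₁ y - H f₂ y := by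
      rw [lp.coeFn_sub, Pi.sub_apply]
    rw [hcoe, Real.norm_eq_abs, abs_le]
    constructor
    · have h1 := hHlip f₂ f₁ y
      rw [norm_sub_rev] at h1
      linarith
    · have h1 := hHlip f₁ f₂ y
      linarith
  · intro u y
    show H (g u) y = y.1 (T u)
    exact hHg u y

/-- Pietsch factorization: a Lipschitz `p`-summing multilinear operator `T` (with
constant `c`) factors as `i_Y ∘ T = h̃ ∘ j_p ∘ ⊗`: there are a Borel probability
measure `μ` on the weak-* unit ball of `n`-linear forms, a `c`-Lipschitz map
`h̃ : L_p(μ) → ℓ∞(B_{Y*})`, and `g : X₁ × ⋯ × Xₙ → L_p(μ)` with `g(u)` the class of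
`φ ↦ φ(u)`, such that `h̃(g(u))` is the function `y* ↦ y*(T(u))`. -/
theorem lipschitzPSumming_factorization {n : ℕ} {X : Fin n → Type*}
    [∀ i, NormedAddCommGroup (X i)] [∀ i, NormedSpace ℝ (X i)] [∀ i, CompleteSpace (X i)]
    {Y : Type*} [NormedAddCommGroup Y] [NormedSpace ℝ Y] [CompleteSpace Y]
    (p : ℝ) (hp : 1 ≤ p) (c : ℝ) (hc : 0 ≤ c) (T : ContinuousMultilinearMap ℝ X Y)
    (hT : LipschitzPSumming p c T) :
    ∃ (μ : Measure (FormBall X)) (_ : IsProbabilityMeasure μ)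
      (g : ((i : Fin n) → X i) → Lp ℝ (ENNReal.ofReal p) μ)
      (htilde : Lp ℝ (ENNReal.ofReal p) μ → lp (fun _ : DualBall Y => ℝ) ⊤),
        (∀ u : (i : Fin n) → X i, ⇑(g u) =ᵐ[μ] fun φ : FormBall X => φ.1 u) ∧
        (∀ f₁ f₂ : Lp ℝ (ENNReal.ofReal p) μ, ‖htilde f₁ - htilde f₂‖ ≤ c * ‖f₁ - f₂‖) ∧
        (∀ (u : (i : Fin n) → X i) (y : DualBall Y), htilde (g u) y = y.1 (T u)) := by
  exact lipschitzPSumming_factorization_aux p hp c hc T hT
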